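/- Let D be a regular 4^m 2^{n-p} design with 2^k runs of resolution at least III, represented by direct-summing two-dimensional subspaces U_1, …, U_m of V = (ZMod 2)^k and two-level vectors w_1, …, w_n ∈ V. Suppose there is a defining word (s, u) ∈ K with s_j = 1 for some index j. Then A_{ℓ,t}(D_(j)) ≤ A_{ℓ,t}(D) for every length ℓ ≥ 3 and every type t, with strict inequality for at least one pair (ℓ, t); consequently the word length pattern of type m of the delete-one-factor projection D_(j) is lexicographically strictly smaller than that of D, i.e., D_(j) has strictly less aberration of type m than D. -/
import Mathlib


/-- The defining relation (including the zero word) of a regular `4^m 2^{n-p}` design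
represented by subspaces `U t` (four-level factors) and vectors `w i` (two-level factors)
in `V = (ZMod 2)^k`: the set of pairs `(s, u)` with each `u t ∈ U t` and
`∑ i, s i • w i + ∑ t, u t = 0`. -/
def wordSet {k m n : ℕ} (U : Fin m → Submodule (ZMod 2) (Fin k → ZMod 2))
    (w : Fin n → Fin k → ZMod 2) :
    Set ((Fin n → ZMod 2) × (Fin m → (Fin k → ZMod 2))) :=
  {su | (∀ t, su.2 t ∈ U t) ∧ (∑ i, su.1 i • w i) + (∑ t, su.2 t) = 0}

/-- The length of a word `(s, u)`: the number of indices `i` with `s i = 1` plus the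
number of four-level factors `t` with `u t ≠ 0`. -/
def wordLength {k m n : ℕ} (su : (Fin n → ZMod 2) × (Fin m → (Fin k → ZMod 2))) : ℕ :=
  (Finset.univ.filter fun i => su.1 i = 1).card +
    (Finset.univ.filter fun t => su.2 t ≠ 0).card

/-- The type of a word `(s, u)`: the number of four-level factors `t` with `u t ≠ 0`. -/
def wordType {k m n : ℕ} (su : (Fin n → ZMod 2) × (Fin m → (Fin k → ZMod 2))) : ℕ :=
  (Finset.univ.filter fun t => su.2 t ≠ 0).card

/-- `Acount U w ℓ t` is the number `A_{ℓ,t}` of defining words of length `ℓ` and type `t`. -/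
noncomputable def Acount {k m n : ℕ} (U : Fin m → Submodule (ZMod 2) (Fin k → ZMod 2))
    (w : Fin n → Fin k → ZMod 2) (ℓ t : ℕ) : ℕ :=
  Nat.card {su : (Fin n → ZMod 2) × (Fin m → (Fin k → ZMod 2)) //
    su ∈ wordSet U w ∧ su ≠ 0 ∧ wordLength su = ℓ ∧ wordType su = t}

/-- `wlpLexLt A B` says that the word length pattern of type `m` recorded by `A`
(as a function `(length, type) ↦ A_{ℓ,t}`) is lexicographically strictly smaller than
the one recorded by `B`, where positions are ordered by increasing length and,
within a length, by decreasing type: "less aberration of type m". -/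
def wlpLexLt (A B : ℕ → ℕ → ℕ) : Prop :=
  ∃ ℓ t, A ℓ t < B ℓ t ∧
    ∀ ℓ' t', (ℓ' < ℓ ∨ (ℓ' = ℓ ∧ t < t')) → A ℓ' t' = B ℓ' t'

/-- If a resolution-≥III design `D` has a defining word with `s j = 1`, then the
delete-one-factor projection `D_(j)` satisfies `A_{ℓ,t}(D_(j)) ≤ A_{ℓ,t}(D)` for every
length `ℓ ≥ 3` and type `t`, with strict inequality for at least one pair `(ℓ, t)`;
consequently `D_(j)` has strictly less aberration of type `m` than `D`. -/
theorem deleteOneFactor_lessAberration {k m n : ℕ}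
    (U : Fin m → Submodule (ZMod 2) (Fin k → ZMod 2))
    (hU2 : ∀ t, Module.finrank (ZMod 2) (U t) = 2)
    (hUind : iSupIndep U)
    (w : Fin (n + 1) → Fin k → ZMod 2)
    (hres : ∀ su ∈ wordSet U w, su ≠ 0 → 3 ≤ wordLength su)
    (j : Fin (n + 1))
    (hword : ∃ su ∈ wordSet U w, su.1 j = 1) :
    (∀ ℓ t, 3 ≤ ℓ → Acount U (w ∘ j.succAbove) ℓ t ≤ Acount U w ℓ t) ∧
      (∃ ℓ t, 3 ≤ ℓ ∧ Acount U (w ∘ j.succAbove) ℓ t < Acount U w ℓ t) ∧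
      wlpLexLt (Acount U (w ∘ j.succAbove)) (Acount U w) := by
  classical
  obtain ⟨su0, hsu0K, hsu0j⟩ := hword
  set w' : Fin n → Fin k → ZMod 2 := w ∘ j.succAbove with hw'
  -- The insertion map from words of the projection to words of the full design
  set F : (Fin n → ZMod 2) × (Fin m → (Fin k → ZMod 2)) →
      (Fin (n + 1) → ZMod 2) × (Fin m → (Fin k → ZMod 2)) :=
    fun su => (Fin.insertNth (α := fun _ => ZMod 2) j 0 su.1, su.2) with hF
  have hFsum : ∀ s' : Fin n → ZMod 2,
      (∑ i, (Fin.insertNth (α := fun _ => ZMod 2) j 0 s') i • w i) = ∑ i, s' i • w' i := by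
    intro s'
    rw [Fin.sum_univ_succAbove (fun i => (Fin.insertNth (α := fun _ => ZMod 2) j 0 s') i • w i) j]
    simp [w']
  have hFmem : ∀ su, su ∈ wordSet U w' → F su ∈ wordSet U w := by
    intro su hsu
    refine ⟨hsu.1, ?_⟩
    show (∑ i, (Fin.insertNth (α := fun _ => ZMod 2) j 0 su.1) i • w i) + (∑ t, su.2 t) = 0
    rw [hFsum]; exact hsu.2
  have hFne : ∀ su : (Fin n → ZMod 2) × (Fin m → (Fin k → ZMod 2)),
      su ≠ 0 → F su ≠ 0 := by
    intro su h h0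
    apply h
    have h1 : Fin.insertNth (α := fun _ => ZMod 2) j 0 su.1 = 0 := congrArg Prod.fst h0
    have h2 : su.2 = 0 := congrArg Prod.snd h0
    have h1' : su.1 = 0 := by
      funext i
      have := congrFun h1 (j.succAbove i)
      rwa [Fin.insertNth_apply_succAbove] at this
    exact Prod.ext h1' h2
  have hcard : ∀ s' : Fin n → ZMod 2,
      (Finset.univ.filter fun i => (Fin.insertNth (α := fun _ => ZMod 2) j 0 s') i = 1).card =
        (Finset.univ.filter fun i => s' i = 1).card := by
    intro s'
    rw [Finset.card_filter, Finset.card_filter,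
      Fin.sum_univ_succAbove (fun i => if (Fin.insertNth (α := fun _ => ZMod 2) j 0 s') i = 1 then 1 else 0) j]
    simp
  have hFlen : ∀ su, wordLength (F su) = wordLength su := by
    intro su
    show (Finset.univ.filter fun i => (Fin.insertNth (α := fun _ => ZMod 2) j 0 su.1) i = 1).card +
        (Finset.univ.filter fun t => su.2 t ≠ 0).card = _
    rw [hcard]; rfl
  have hFtype : ∀ su, wordType (F su) = wordType su := fun su => rfl
  have hFinj : Function.Injective F := by
    intro a b hab
    have h1 := congrArg Prod.fst hab
    have h2 := congrArg Prod.snd hab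
    simp only [hF] at h1 h2
    refine Prod.ext ?_ h2
    funext i
    have := congrFun h1 (j.succAbove i)
    rwa [Fin.insertNth_apply_succAbove, Fin.insertNth_apply_succAbove] at this
  -- the induced map on subtypes
  have hφ : ∀ ℓ t, ∃ φ : {su : (Fin n → ZMod 2) × (Fin m → (Fin k → ZMod 2)) //
        su ∈ wordSet U w' ∧ su ≠ 0 ∧ wordLength su = ℓ ∧ wordType su = t} →
      {su : (Fin (n + 1) → ZMod 2) × (Fin m → (Fin k → ZMod 2)) //
        su ∈ wordSet U w ∧ su ≠ 0 ∧ wordLength su = ℓ ∧ wordType su = t},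
      Function.Injective φ ∧ ∀ x, ((φ x : _)).1.1 j = 0 := by
    intro ℓ t
    refine ⟨fun x => ⟨F x.1, hFmem _ x.2.1, hFne _ x.2.2.1,
      by rw [hFlen]; exact x.2.2.2.1, by rw [hFtype]; exact x.2.2.2.2⟩, ?_, ?_⟩
    · intro a b hab
      exact Subtype.ext (hFinj (congrArg Subtype.val hab))
    · intro x
      exact Fin.insertNth_apply_same (α := fun _ => ZMod 2) j 0 x.1.1
  have hle : ∀ ℓ t, Acount U w' ℓ t ≤ Acount U w ℓ t := by
    intro ℓ t
    obtain ⟨φ, hφinj, -⟩ := hφ ℓ t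
    exact Nat.card_le_card_of_injective φ hφinj
  have hsu0ne : su0 ≠ 0 := by
    intro h; rw [h] at hsu0j
    exact one_ne_zero hsu0j.symm
  have hℓ0 : 3 ≤ wordLength su0 := hres su0 hsu0K hsu0ne
  have hstrict : Acount U w' (wordLength su0) (wordType su0) <
      Acount U w (wordLength su0) (wordType su0) := by
    obtain ⟨φ, hφinj, hφj⟩ := hφ (wordLength su0) (wordType su0)
    unfold Acount
    letI : Fintype {su : (Fin n → ZMod 2) × (Fin m → (Fin k → ZMod 2)) //
        su ∈ wordSet U w' ∧ su ≠ 0 ∧ wordLength su = wordLength su0 ∧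
          wordType su = wordType su0} := Fintype.ofFinite _
    letI : Fintype {su : (Fin (n + 1) → ZMod 2) × (Fin m → (Fin k → ZMod 2)) //
        su ∈ wordSet U w ∧ su ≠ 0 ∧ wordLength su = wordLength su0 ∧
          wordType su = wordType su0} := Fintype.ofFinite _
    rw [Nat.card_eq_fintype_card, Nat.card_eq_fintype_card]
    refine Fintype.card_lt_of_injective_of_notMem φ hφinj
      (b := ⟨su0, hsu0K, hsu0ne, rfl, rfl⟩) ?_
    rintro ⟨x, hx⟩
    have h0 : (su0.1 j : ZMod 2) = 0 := by
      rw [← congrArg (fun z => (z : _).1.1 j) hx]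
      exact hφj x
    rw [hsu0j] at h0
    exact one_ne_zero h0
  refine ⟨fun ℓ t _ => hle ℓ t, ⟨wordLength su0, wordType su0, hℓ0, hstrict⟩, ?_⟩
  -- the lexicographic part
  have hzero : ∀ ℓ' t', m < t' → Acount U w ℓ' t' = 0 := by
    intro ℓ' t' ht'
    have : IsEmpty {su : (Fin (n + 1) → ZMod 2) × (Fin m → (Fin k → ZMod 2)) //
        su ∈ wordSet U w ∧ su ≠ 0 ∧ wordLength su = ℓ' ∧ wordType su = t'} := by
      refine ⟨fun x => ?_⟩
      have h1 : wordType x.1 ≤ m := by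
        refine le_trans (Finset.card_filter_le _ _) ?_
        simp
      rw [x.2.2.2.2] at h1
      exact absurd h1 (not_le.mpr ht')
    exact Nat.card_of_isEmpty
  have hexists : ∃ ℓ, ∃ t, Acount U w' ℓ t < Acount U w ℓ t :=
    ⟨wordLength su0, wordType su0, hstrict⟩
  set ℓ := Nat.find hexists with hℓ
  obtain ⟨t1, ht1⟩ := Nat.find_spec hexists
  have ht1m : t1 ≤ m := by
    by_contra h
    rw [hzero ℓ t1 (not_le.mp h)] at ht1
    exact Nat.not_lt_zero _ ht1
  set P : ℕ → Prop := fun t => Acount U w' ℓ t < Acount U w ℓ t with hP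
  set t := Nat.findGreatest P m with ht
  have hPt : P t := Nat.findGreatest_spec ht1m ht1
  refine ⟨ℓ, t, hPt, ?_⟩
  intro ℓ' t' h'
  rcases h' with h' | ⟨rfl, h'⟩
  · have hnot : ¬ ∃ t, Acount U w' ℓ' t < Acount U w ℓ' t := Nat.find_min hexists h'
    push_neg at hnot
    exact le_antisymm (hle ℓ' t') (hnot t')
  · have hnot : ¬ P t' := by
      rcases le_or_gt t' m with hm | hm
      · exact Nat.findGreatest_is_greatest h' hm
      · intro hc
        simp only [hP] at hc
        rw [hzero ℓ t' hm] at hc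
        exact Nat.not_lt_zero _ hc
    exact le_antisymm (hle ℓ t') (not_lt.mp hnot)
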